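/- Let V be a finite-dimensional complex inner product space and let γ, Ĥ : V → V be self-adjoint linear maps with γ² = 1 and Ĥ² = 1. Then Tr γ + Tr Ĥ = 2 · (dim(ker(γ − 1) ∩ ker(Ĥ − 1)) − dim(ker(γ + 1) ∩ ker(Ĥ + 1))), where the right-hand side dimensions are over ℂ and the equality is between complex numbers (the traces being real integers). -/

import Mathlib

open LinearMap Module

section aux
variable {V : Type*} [NormedAddCommGroup V] [InnerProductSpace ℂ V] [FiniteDimensional ℂ V]

lemma aux_isProj (γ : V →ₗ[ℂ] V) (hγ : γ ∘ₗ γ = 1) :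
    LinearMap.IsProj (LinearMap.ker (γ - 1)) ((2 : ℂ)⁻¹ • (γ + 1)) := by
  constructor
  · intro x
    simp only [mem_ker, map_sub, LinearMap.smul_apply, LinearMap.add_apply, one_apply, LinearMap.sub_apply]
    have : γ (γ x) = x := by
      have := congrArg (fun f => f x) hγ; simpa using this
    simp [smul_add, this]
    abel
  · intro x hx
    simp only [mem_ker, LinearMap.sub_apply, one_apply, sub_eq_zero] at hx
    simp [hx, smul_add]
    rw [← add_smul]
    norm_num

lemma aux_trace (γ : V →ₗ[ℂ] V) (hγ : γ ∘ₗ γ = 1) :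
    LinearMap.trace ℂ V γ =
      2 * (finrank ℂ (LinearMap.ker (γ - 1)) : ℂ) - (finrank ℂ V : ℂ) := by
  have h := (aux_isProj γ hγ).trace
  have h2 : LinearMap.trace ℂ V ((2 : ℂ)⁻¹ • (γ + 1)) =
      (2 : ℂ)⁻¹ * (LinearMap.trace ℂ V γ + (finrank ℂ V : ℂ)) := by
    simp [map_add, LinearMap.trace_one, smul_eq_mul]
    ring
  rw [h2] at h
  field_simp at h
  linear_combination h

lemma aux_dim (γ : V →ₗ[ℂ] V) (hγ : γ ∘ₗ γ = 1) :
    finrank ℂ (LinearMap.ker (γ - 1)) + finrank ℂ (LinearMap.ker (γ + 1)) =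
      finrank ℂ V := by
  have hneg : (-γ) ∘ₗ (-γ) = 1 := by
    rw [LinearMap.comp_neg, LinearMap.neg_comp, neg_neg, hγ]
  have h1 := aux_trace γ hγ
  have h2 := aux_trace (-γ) hneg
  have hker : LinearMap.ker (-γ - 1) = LinearMap.ker (γ + 1) := by
    have he : (-γ - 1 : V →ₗ[ℂ] V) = -(γ + 1) := by abel
    rw [he]
    ext x
    simp only [mem_ker, LinearMap.neg_apply, LinearMap.add_apply, one_apply, neg_eq_zero, neg_add_eq_zero]
  rw [hker, map_neg] at h2
  have : ((finrank ℂ (LinearMap.ker (γ - 1)) + finrank ℂ (LinearMap.ker (γ + 1)) : ℕ) : ℂ)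
      = ((finrank ℂ V : ℕ) : ℂ) := by push_cast; linear_combination -(h1 + h2) / 2
  exact_mod_cast this

lemma aux_orth (γ : V →ₗ[ℂ] V) (hγsa : LinearMap.adjoint γ = γ) (hγ : γ ∘ₗ γ = 1) :
    LinearMap.ker (γ + 1) = (LinearMap.ker (γ - 1))ᗮ := by
  have hle : LinearMap.ker (γ + 1) ≤ (LinearMap.ker (γ - 1))ᗮ := by
    intro x hx
    rw [Submodule.mem_orthogonal]
    intro u hu
    simp only [mem_ker, LinearMap.add_apply, one_apply, add_eq_zero_iff_eq_neg] at hx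
    simp only [mem_ker, LinearMap.sub_apply, one_apply, sub_eq_zero] at hu
    have h1 : inner ℂ (γ u) x = (inner ℂ u (γ x) : ℂ) := by
      rw [← hγsa, LinearMap.adjoint_inner_left, hγsa]
    rw [hu, hx, inner_neg_right] at h1
    have : (2 : ℂ) * inner ℂ u x = 0 := by linear_combination h1
    simpa using this
  refine (Submodule.eq_of_le_of_finrank_eq hle ?_).symm.symm
  have h1 := aux_dim γ hγ
  have h2 := Submodule.finrank_add_finrank_orthogonal (K := LinearMap.ker (γ - 1))
  omega

end aux

/-- For two self-adjoint involutions `γ` and `Ĥ` on a finite-dimensional complex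
inner product space,
`Tr γ + Tr Ĥ = 2 (dim(ker(γ−1) ∩ ker(Ĥ−1)) − dim(ker(γ+1) ∩ ker(Ĥ+1)))`. -/
theorem trace_sum_of_selfadjoint_involutions
    {V : Type*} [NormedAddCommGroup V] [InnerProductSpace ℂ V] [FiniteDimensional ℂ V]
    (γ H : V →ₗ[ℂ] V)
    (hγsa : LinearMap.adjoint γ = γ) (hHsa : LinearMap.adjoint H = H)
    (hγ : γ ∘ₗ γ = 1) (hH : H ∘ₗ H = 1) :
    LinearMap.trace ℂ V γ + LinearMap.trace ℂ V H =
      2 * ((Module.finrank ℂ ↥(LinearMap.ker (γ - 1) ⊓ LinearMap.ker (H - 1)) : ℂ)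
        - (Module.finrank ℂ ↥(LinearMap.ker (γ + 1) ⊓ LinearMap.ker (H + 1)) : ℂ)) := by
  have hA := aux_trace γ hγ
  have hB := aux_trace H hH
  rw [aux_orth γ hγsa hγ, aux_orth H hHsa hH, Submodule.inf_orthogonal, hA, hB]
  set A := LinearMap.ker (γ - 1)
  set B := LinearMap.ker (H - 1)
  have f1 := Submodule.finrank_sup_add_finrank_inf_eq A B
  have f2 := Submodule.finrank_add_finrank_orthogonal (K := A ⊔ B)
  have c1 : ((finrank ℂ (A ⊔ B : Submodule ℂ V) : ℂ) + (finrank ℂ (A ⊓ B : Submodule ℂ V) : ℂ))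
      = (finrank ℂ A : ℂ) + (finrank ℂ B : ℂ) := by exact_mod_cast f1
  have c2 : ((finrank ℂ (A ⊔ B : Submodule ℂ V) : ℂ)
      + (finrank ℂ ((A ⊔ B : Submodule ℂ V)ᗮ) : ℂ)) = (finrank ℂ V : ℂ) := by exact_mod_cast f2
  linear_combination 2 * c2 - 2 * c1
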